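/- Let T be a tree of sequences. Call a probability tree p on T positive if p t k > 0 for every non-maximal t ∈ T and every k ∈ ℕ with t ++ [k] ∈ T, and call an inductive probability measure ξ on T positive if ξ(t) > 0 for all t ∈ T. Then: (i) if p is a positive probability tree on T, then Ξ_p is a positive inductive probability measure on T; (ii) if p and q are positive probability trees on T with Ξ_p(t) = Ξ_q(t) for all t ∈ T, then p t k = q t k for every non-maximal t ∈ T and every k with t ++ [k] ∈ T; (iii) for every positive inductive probability measure ξ on T there exists a positive probability tree p on T with Ξ_p(t) = ξ(t) for all t ∈ T. -/

import Mathlib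

open scoped ENNReal
open MeasureTheory

noncomputable section

/-- A tree of sequences: a nonempty set of finite lists of naturals closed under prefixes. -/
def IsTree (T : Set (List ℕ)) : Prop :=
  T.Nonempty ∧ ∀ s t : List ℕ, s <+: t → t ∈ T → s ∈ T

/-- `t` is a maximal node of `T`: it has no successor in `T`. -/
def IsMaxNode (T : Set (List ℕ)) (t : List ℕ) : Prop :=
  ∀ k : ℕ, t ++ [k] ∉ T

/-- A probability tree on `T`. -/
def IsProbTree (T : Set (List ℕ)) (p : List ℕ → ℕ → ℝ≥0∞) : Prop :=
  ∀ t ∈ T, ¬ IsMaxNode T t →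
    (∀ k : ℕ, t ++ [k] ∉ T → p t k = 0) ∧ (∑' k : ℕ, p t k = 1)

/-- The measure induced by a probability tree: `Ξ_p(t) = ∏_{i<|t|} p (t↾i) (t i)`. -/
def Xi (p : List ℕ → ℕ → ℝ≥0∞) (t : List ℕ) : ℝ≥0∞ :=
  ∏ i ∈ Finset.range t.length, p (t.take i) (t.getD i 0)

/-- An inductive probability measure on `T`. -/
def IsIPM (T : Set (List ℕ)) (ξ : List ℕ → ℝ≥0∞) : Prop :=
  ξ [] = 1 ∧ ∀ t ∈ T, ¬ IsMaxNode T t →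
    ξ t = ∑' k : {k : ℕ // t ++ [k] ∈ T}, ξ (t ++ [k.1])

/-- The set of infinite branches of `T`. -/
def limT (T : Set (List ℕ)) : Set (ℕ → ℕ) :=
  {x | ∀ n : ℕ, (List.range n).map x ∈ T}

/-- `T` is pruned: every node has a successor in `T`. -/
def Pruned (T : Set (List ℕ)) : Prop := ∀ t ∈ T, ∃ k : ℕ, t ++ [k] ∈ T

/-- The basic clopen set `[t]` of branches through `t`. -/
def cyl (T : Set (List ℕ)) (t : List ℕ) : Set ↥(limT T) :=
  {x | (List.range t.length).map x.1 = t}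

/-- A positive probability tree on `T`. -/
def PosProbTree (T : Set (List ℕ)) (p : List ℕ → ℕ → ℝ≥0∞) : Prop :=
  IsProbTree T p ∧ ∀ t ∈ T, ¬ IsMaxNode T t → ∀ k : ℕ, t ++ [k] ∈ T → 0 < p t k

/-- A positive inductive probability measure on `T`. -/
def PosIPM (T : Set (List ℕ)) (ξ : List ℕ → ℝ≥0∞) : Prop :=
  IsIPM T ξ ∧ ∀ t ∈ T, 0 < ξ t


lemma Xi_nil (p : List ℕ → ℕ → ℝ≥0∞) : Xi p [] = 1 := by simp [Xi]

lemma Xi_append (p : List ℕ → ℕ → ℝ≥0∞) (t : List ℕ) (k : ℕ) :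
    Xi p (t ++ [k]) = Xi p t * p t k := by
  unfold Xi
  rw [List.length_append, List.length_singleton, Finset.prod_range_succ]
  congr 1
  · apply Finset.prod_congr rfl
    intro i hi
    rw [Finset.mem_range] at hi
    rw [List.take_append_of_le_length hi.le, List.getD_append _ _ _ _ hi]
  · rw [List.take_append_of_le_length le_rfl, List.take_length,
      List.getD_append_right _ _ _ _ le_rfl]
    simp

lemma Xi_pos_le_one {T : Set (List ℕ)} (hT : IsTree T) {p : List ℕ → ℕ → ℝ≥0∞}
    (hp : PosProbTree T p) : ∀ t ∈ T, 0 < Xi p t ∧ Xi p t ≤ 1 := by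
  intro t
  induction t using List.reverseRecOn with
  | nil => intro _; simp [Xi_nil]
  | append_singleton s k ih =>
    intro hsk
    have hs : s ∈ T := hT.2 s (s ++ [k]) ⟨[k], rfl⟩ hsk
    obtain ⟨h0, h1⟩ := ih hs
    have hnm : ¬ IsMaxNode T s := fun h => h k hsk
    have hpos := hp.2 s hs hnm k hsk
    have hle : p s k ≤ 1 := by
      rw [← (hp.1 s hs hnm).2]; exact ENNReal.le_tsum k
    rw [Xi_append]
    exact ⟨ENNReal.mul_pos h0.ne' hpos.ne', mul_le_one' h1 hle⟩

lemma xi_pos_le_one {T : Set (List ℕ)} (hT : IsTree T) {ξ : List ℕ → ℝ≥0∞}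
    (hξ : PosIPM T ξ) : ∀ t ∈ T, 0 < ξ t ∧ ξ t ≤ 1 := by
  intro t
  induction t using List.reverseRecOn with
  | nil => intro _; simp [hξ.1.1]
  | append_singleton s k ih =>
    intro hsk
    have hs : s ∈ T := hT.2 s (s ++ [k]) ⟨[k], rfl⟩ hsk
    obtain ⟨h0, h1⟩ := ih hs
    have hnm : ¬ IsMaxNode T s := fun h => h k hsk
    refine ⟨hξ.2 _ hsk, le_trans ?_ h1⟩
    rw [hξ.1.2 s hs hnm]
    exact ENNReal.le_tsum (⟨k, hsk⟩ : {k : ℕ // s ++ [k] ∈ T})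

theorem stmt5 (T : Set (List ℕ)) (hT : IsTree T) :
    (∀ p : List ℕ → ℕ → ℝ≥0∞, PosProbTree T p → PosIPM T (Xi p)) ∧
    (∀ p q : List ℕ → ℕ → ℝ≥0∞, PosProbTree T p → PosProbTree T q →
      (∀ t ∈ T, Xi p t = Xi q t) →
      ∀ t ∈ T, ¬ IsMaxNode T t → ∀ k : ℕ, t ++ [k] ∈ T → p t k = q t k) ∧
    (∀ ξ : List ℕ → ℝ≥0∞, PosIPM T ξ →
      ∃ p : List ℕ → ℕ → ℝ≥0∞, PosProbTree T p ∧ ∀ t ∈ T, Xi p t = ξ t) := by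
  classical
  have part1 : ∀ p : List ℕ → ℕ → ℝ≥0∞, PosProbTree T p → PosIPM T (Xi p) := by
    intro p hp
    refine ⟨⟨Xi_nil p, ?_⟩, fun t ht => (Xi_pos_le_one hT hp t ht).1⟩
    intro t ht hnm
    have hsum : (∑' k : {k : ℕ // t ++ [k] ∈ T}, Xi p (t ++ [k.1]))
        = ∑' k : ℕ, Xi p (t ++ [k]) := by
      refine tsum_subtype_eq_of_support_subset
        (f := fun k : ℕ => Xi p (t ++ [k])) (s := {k | t ++ [k] ∈ T}) ?_
      intro k hk
      by_contra hmem
      apply hk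
      show Xi p (t ++ [k]) = 0
      rw [Xi_append, (hp.1 t ht hnm).1 k hmem, mul_zero]
    rw [hsum]
    have : ∀ k : ℕ, Xi p (t ++ [k]) = Xi p t * p t k := fun k => Xi_append p t k
    simp_rw [this]
    rw [ENNReal.tsum_mul_left, (hp.1 t ht hnm).2, mul_one]
  refine ⟨part1, ?_, ?_⟩
  · intro p q hp hq hpq t ht hnm k hk
    have h1 : Xi p (t ++ [k]) = Xi q (t ++ [k]) := hpq _ hk
    rw [Xi_append, Xi_append, ← hpq t ht] at h1
    obtain ⟨h0, hle⟩ := Xi_pos_le_one hT hp t ht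
    exact (ENNReal.mul_right_inj h0.ne' (hle.trans_lt ENNReal.one_lt_top).ne).mp h1
  · intro ξ hξ
    set p : List ℕ → ℕ → ℝ≥0∞ :=
      fun t k => if t ++ [k] ∈ T then ξ (t ++ [k]) / ξ t else 0 with hpdef
    have hfin : ∀ t ∈ T, ξ t ≠ 0 ∧ ξ t ≠ ∞ := by
      intro t ht
      obtain ⟨h0, h1⟩ := xi_pos_le_one hT hξ t ht
      exact ⟨h0.ne', (h1.trans_lt ENNReal.one_lt_top).ne⟩
    have hXi : ∀ t ∈ T, Xi p t = ξ t := by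
      intro t
      induction t using List.reverseRecOn with
      | nil => intro _; rw [Xi_nil, hξ.1.1]
      | append_singleton s k ih =>
        intro hsk
        have hs : s ∈ T := hT.2 s (s ++ [k]) ⟨[k], rfl⟩ hsk
        rw [Xi_append, ih hs, hpdef]
        simp only [if_pos hsk]
        exact ENNReal.mul_div_cancel (hfin s hs).1 (hfin s hs).2
    refine ⟨p, ⟨?_, ?_⟩, hXi⟩
    · intro t ht hnm
      refine ⟨fun k hk => by rw [hpdef]; exact if_neg hk, ?_⟩
      have hsupp : (∑' k : {k : ℕ // t ++ [k] ∈ T}, p t k.1) = ∑' k : ℕ, p t k :=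
        tsum_subtype_eq_of_support_subset
          (f := fun k : ℕ => p t k) (s := {k | t ++ [k] ∈ T}) (by
          intro k hk
          by_contra hmem
          rw [Function.mem_support, hpdef] at hk
          exact hk (if_neg hmem))
      rw [← hsupp]
      have : ∀ k : {k : ℕ // t ++ [k] ∈ T}, p t k.1 = ξ (t ++ [k.1]) * (ξ t)⁻¹ := by
        intro k
        rw [hpdef]
        simp only [if_pos k.2]
        rw [div_eq_mul_inv]
      simp_rw [this]
      rw [ENNReal.tsum_mul_right, ← hξ.1.2 t ht hnm,
        ENNReal.mul_inv_cancel (hfin t ht).1 (hfin t ht).2]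
    · intro t ht hnm k hk
      rw [hpdef]
      simp only [if_pos hk]
      exact ENNReal.div_pos (hfin _ hk).1 (hfin t ht).2
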